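/- Let μ be a measure on a measurable space X, let p₁ and p₋₁ be nonnegative measurable probability densities with ∫ p₁ dμ = ∫ p₋₁ dμ = 1, let π ∈ (0,1), and set p = π·p₁ + (1−π)·p₋₁. For c > 0 define f_c : [0,∞) → ℝ by f_c(t) = −(t−1) for t ≤ 1 and f_c(t) = c·(t−1) for t > 1, and define Div(θ) = ∫_{p>0} f_c(θ·p₁(x)/p(x))·p(x) dμ(x) for θ ∈ [0,1]. Define D₁ = {x : p₁(x) > 0 and π·p₁(x) = p(x)} and D₂ = {x : p₁(x) > 0 and π·p₁(x) < p(x)}. Then π is a global minimizer of Div over [0,1] if and only if c·∫_{D₁} p₁ dμ ≥ ∫_{D₂} p₁ dμ. -/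

import Mathlib

open MeasureTheory

set_option maxHeartbeats 2000000 in
/-- The true class prior π is a global minimizer of the partial matching objective
under the penalized L₁-type divergence f_c if and only if
c·∫_{D₁} p₁ dμ ≥ ∫_{D₂} p₁ dμ. -/
theorem penalized_L1_minimizer_iff
    {X : Type*} [MeasurableSpace X] (μ : Measure X)
    (p₁ pneg : X → ℝ) (hp₁meas : Measurable p₁) (hpnegmeas : Measurable pneg)
    (hp₁nonneg : ∀ x, 0 ≤ p₁ x) (hpnegnonneg : ∀ x, 0 ≤ pneg x)
    (hp₁int : ∫ x, p₁ x ∂μ = 1) (hpnegint : ∫ x, pneg x ∂μ = 1)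
    (π : ℝ) (hπ : π ∈ Set.Ioo (0 : ℝ) 1)
    (p : X → ℝ) (hp : ∀ x, p x = π * p₁ x + (1 - π) * pneg x)
    (c : ℝ) (hc : 0 < c)
    (fc : ℝ → ℝ) (hfc : ∀ t, fc t = if t ≤ 1 then -(t - 1) else c * (t - 1))
    (Div : ℝ → ℝ)
    (hDiv : ∀ θ, Div θ = ∫ x in {x | 0 < p x}, fc (θ * p₁ x / p x) * p x ∂μ) :
    (∀ θ ∈ Set.Icc (0 : ℝ) 1, Div π ≤ Div θ) ↔
      ∫ x in {x | 0 < p₁ x ∧ π * p₁ x < p x}, p₁ x ∂μ ≤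
        c * ∫ x in {x | 0 < p₁ x ∧ π * p₁ x = p x}, p₁ x ∂μ := by
  obtain ⟨hπ0, hπ1⟩ := hπ
  have hpe : p = fun x => π * p₁ x + (1 - π) * pneg x := funext hp
  have hpmeas : Measurable p := by
    rw [hpe]; exact (hp₁meas.const_mul π).add (hpnegmeas.const_mul (1 - π))
  have hple : ∀ x, π * p₁ x ≤ p x := by
    intro x; rw [hp]; nlinarith [hpnegnonneg x]
  have hp₁posp : ∀ x, 0 < p₁ x → 0 < p x := by
    intro x h; exact lt_of_lt_of_le (by positivity) (hple x)
  have hp₁intg : Integrable p₁ μ := by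
    by_contra h; rw [integral_undef h] at hp₁int; norm_num at hp₁int
  have hpnegintg : Integrable pneg μ := by
    by_contra h; rw [integral_undef h] at hpnegint; norm_num at hpnegint
  have hpintg : Integrable p μ := by
    rw [hpe]; exact (hp₁intg.const_mul π).add (hpnegintg.const_mul (1 - π))
  have hpint1 : ∫ x, p x ∂μ = 1 := by
    rw [hpe, integral_add ((hp₁intg.const_mul π)) ((hpnegintg.const_mul (1 - π))),
      integral_const_mul, integral_const_mul, hp₁int, hpnegint]; ring
  set S : Set X := {x | 0 < p x} with hSdef
  have hSmeas : MeasurableSet S := measurableSet_lt measurable_const hpmeas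
  set D₁ : Set X := {x | 0 < p₁ x ∧ π * p₁ x = p x} with hD₁def
  set D₂ : Set X := {x | 0 < p₁ x ∧ π * p₁ x < p x} with hD₂def
  have hD₁meas : MeasurableSet D₁ :=
    (measurableSet_lt measurable_const hp₁meas).inter
      (measurableSet_eq_fun (hp₁meas.const_mul π) hpmeas)
  have hD₂meas : MeasurableSet D₂ :=
    (measurableSet_lt measurable_const hp₁meas).inter
      (measurableSet_lt (hp₁meas.const_mul π) hpmeas)
  have hD₁S : D₁ ⊆ S := fun x hx => hp₁posp x hx.1
  have hD₂S : D₂ ⊆ S := fun x hx => hp₁posp x hx.1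
  -- the simplified integrand
  set F : ℝ → X → ℝ := fun θ x =>
    if θ * p₁ x ≤ p x then p x - θ * p₁ x else c * (θ * p₁ x - p x) with hFdef
  have hFeq : ∀ θ, ∀ x ∈ S, fc (θ * p₁ x / p x) * p x = F θ x := by
    intro θ x hx
    have hpx : 0 < p x := hx
    have hne : p x ≠ 0 := ne_of_gt hpx
    simp only [hFdef, hfc]
    by_cases h : θ * p₁ x ≤ p x
    · rw [if_pos ((div_le_one hpx).mpr h), if_pos h]
      field_simp; ring
    · rw [if_neg (fun hh => h ((div_le_one hpx).mp hh)), if_neg h]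
      field_simp
  have hDivF : ∀ θ, Div θ = ∫ x in S, F θ x ∂μ := by
    intro θ; rw [hDiv]
    exact setIntegral_congr_fun hSmeas (fun x hx => hFeq θ x hx)
  have hFmeas : ∀ θ, Measurable (F θ) := by
    intro θ
    exact Measurable.ite (measurableSet_le (hp₁meas.const_mul θ) hpmeas)
      (hpmeas.sub (hp₁meas.const_mul θ))
      (((hp₁meas.const_mul θ).sub hpmeas).const_mul c)
  have hFint : ∀ θ, 0 ≤ θ → θ ≤ 1 → IntegrableOn (F θ) S μ := by
    intro θ hθ0 hθ1
    apply Integrable.mono' ((hpintg.add (hp₁intg.const_mul c)).integrableOn)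
      ((hFmeas θ).aestronglyMeasurable)
    filter_upwards with x
    have h1 := hp₁nonneg x
    have h2 := le_trans (mul_nonneg hπ0.le (hp₁nonneg x)) (hple x)
    rw [Real.norm_eq_abs, abs_le]
    simp only [hFdef, Pi.add_apply]
    constructor
    · split <;> nlinarith [mul_nonneg hc.le h1,
        mul_nonneg (mul_nonneg hc.le (sub_nonneg.mpr hθ1)) h1]
    · split <;> nlinarith [mul_nonneg hc.le h1,
        mul_nonneg (mul_nonneg hc.le (sub_nonneg.mpr hθ1)) h1]
  -- integrals over S equal full integrals
  have hcompl : ∀ f : X → ℝ, (∀ x, 0 ≤ f x) → (∀ x, p x ≤ 0 → f x = 0) →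
      Integrable f μ → ∫ x in S, f x ∂μ = ∫ x, f x ∂μ := by
    intro f hf0 hf hintg
    rw [← integral_add_compl hSmeas hintg]
    have : ∫ x in Sᶜ, f x ∂μ = 0 := by
      rw [setIntegral_congr_fun hSmeas.compl (g := fun _ => (0:ℝ))
        (fun x hx => hf x (le_of_not_gt hx)), integral_zero]
    rw [this, add_zero]
  have hSp : ∫ x in S, p x ∂μ = 1 := by
    rw [hcompl p (fun x => le_trans (mul_nonneg hπ0.le (hp₁nonneg x)) (hple x))
      (fun x hx => le_antisymm hx (le_trans (mul_nonneg hπ0.le (hp₁nonneg x)) (hple x))) hpintg,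
      hpint1]
  have hSp₁ : ∫ x in S, p₁ x ∂μ = 1 := by
    rw [hcompl p₁ hp₁nonneg ?_ hp₁intg, hp₁int]
    intro x hx
    have := hple x
    nlinarith [hp₁nonneg x]
  have hDivlin : ∀ θ, 0 ≤ θ → θ ≤ π → Div θ = 1 - θ := by
    intro θ hθ0 hθπ
    rw [hDivF]
    have : ∀ x ∈ S, F θ x = p x - θ * p₁ x := by
      intro x hx
      simp only [hFdef]
      rw [if_pos (le_trans (by nlinarith [hp₁nonneg x]) (hple x))]
    rw [setIntegral_congr_fun hSmeas this, integral_sub hpintg.integrableOn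
      ((hp₁intg.const_mul θ).integrableOn), integral_const_mul, hSp, hSp₁]
    ring
  have hDivπ : Div π = 1 - π := hDivlin π hπ0.le le_rfl
  set A : ℝ := ∫ x in D₁, p₁ x ∂μ with hAdef
  set B : ℝ := ∫ x in D₂, p₁ x ∂μ with hBdef
  have hind₁ : ∫ x in S, D₁.indicator p₁ x ∂μ = A := by
    rw [setIntegral_indicator hD₁meas, Set.inter_eq_right.mpr hD₁S]
  have hind₂ : ∫ x in S, D₂.indicator p₁ x ∂μ = B := by
    rw [setIntegral_indicator hD₂meas, Set.inter_eq_right.mpr hD₂S]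
  have hkey : ∀ θ, π < θ → θ ≤ 1 →
      Div π + (θ - π) * (c * A - B) ≤ Div θ := by
    intro θ hθπ hθ1
    have hθ0 : (0:ℝ) ≤ θ := le_trans hπ0.le hθπ.le
    have hg1 : IntegrableOn (fun x => c * D₁.indicator p₁ x) S μ := by
      exact ((hp₁intg.indicator hD₁meas).const_mul c).integrableOn
    have hg2 : IntegrableOn (fun x => D₂.indicator p₁ x) S μ := by
      exact (hp₁intg.indicator hD₂meas).integrableOn
    have hg3 : IntegrableOn
        (fun x => (θ - π) * (c * D₁.indicator p₁ x - D₂.indicator p₁ x)) S μ := by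
      exact (hg1.sub hg2).const_mul (θ - π)
    have hGint : IntegrableOn
        (fun x => F π x + (θ - π) * (c * D₁.indicator p₁ x - D₂.indicator p₁ x)) S μ :=
      (hFint π hπ0.le hπ1.le).add hg3
    have hptwise : ∀ x ∈ S,
        F π x + (θ - π) * (c * D₁.indicator p₁ x - D₂.indicator p₁ x) ≤ F θ x := by
      intro x hx
      have hx' : 0 < p x := hx
      have hπle := hple x
      by_cases h1 : 0 < p₁ x
      · rcases eq_or_lt_of_le hπle with heq | hlt
        · have hm1 : x ∈ D₁ := ⟨h1, heq⟩
          have hm2 : x ∉ D₂ := fun h => absurd h.2 (by rw [heq]; exact lt_irrefl _)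
          rw [Set.indicator_of_mem hm1, Set.indicator_of_notMem hm2]
          simp only [hFdef]
          rw [if_pos hπle, if_neg (by nlinarith)]
          nlinarith
        · have hm1 : x ∉ D₁ := fun h => absurd h.2 (ne_of_lt hlt)
          have hm2 : x ∈ D₂ := ⟨h1, hlt⟩
          rw [Set.indicator_of_notMem hm1, Set.indicator_of_mem hm2]
          simp only [hFdef]
          rw [if_pos hπle]
          split
          · linarith
          · rename_i hsplit
            push_neg at hsplit
            nlinarith
      · have h0 : p₁ x = 0 := le_antisymm (not_lt.mp h1) (hp₁nonneg x)
        have hm1 : x ∉ D₁ := fun h => h1 h.1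
        have hm2 : x ∉ D₂ := fun h => h1 h.1
        rw [Set.indicator_of_notMem hm1, Set.indicator_of_notMem hm2]
        simp only [hFdef, h0, mul_zero]
        split <;> linarith
    have hmono := setIntegral_mono_on hGint (hFint θ hθ0 hθ1) hSmeas hptwise
    calc Div π + (θ - π) * (c * A - B)
        = ∫ x in S, (F π x + (θ - π) * (c * D₁.indicator p₁ x - D₂.indicator p₁ x)) ∂μ := by
          rw [integral_add (hFint π hπ0.le hπ1.le) hg3, integral_const_mul,
            integral_sub hg1 hg2, integral_const_mul, hind₁, hind₂, ← hDivF π]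
      _ ≤ Div θ := by rw [hDivF θ]; exact hmono
  constructor
  · intro hmin
    have h1π : (0:ℝ) < 1 - π := by linarith
    set θn : ℕ → ℝ := fun n => π + (1 - π) / (n + 1) with hθndef
    have hθnpos : ∀ n : ℕ, π < θn n := by
      intro n
      have h2 : (0:ℝ) < (1 - π) / ((n:ℝ) + 1) := by positivity
      simp only [hθndef]; linarith
    have hθnle : ∀ n : ℕ, θn n ≤ 1 := by
      intro n
      have h2 : (1 - π) / ((n:ℝ) + 1) ≤ 1 - π :=
        div_le_self h1π.le (by exact_mod_cast Nat.one_le_iff_ne_zero.mpr (Nat.succ_ne_zero n))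
      simp only [hθndef]; linarith
    set T : ℕ → Set X := fun n => D₂ ∩ {x | p x < θn n * p₁ x} with hTdef
    have hTmeas : ∀ n, MeasurableSet (T n) :=
      fun n => hD₂meas.inter (measurableSet_lt hpmeas (hp₁meas.const_mul (θn n)))
    have hTD₂ : ∀ n, T n ⊆ D₂ := fun n => Set.inter_subset_left
    set a : ℕ → ℝ := fun n => ∫ x in T n, p₁ x ∂μ with hadef
    have hbound : ∀ n, B ≤ c * A + (1 + c) * a n := by
      intro n
      set θ := θn n with hθdef
      have hθπ : π < θ := hθnpos n
      have hθ1 : θ ≤ 1 := hθnle n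
      have hθ0 : (0:ℝ) ≤ θ := le_trans hπ0.le hθπ.le
      have hu1 : IntegrableOn (fun x => c * D₁.indicator p₁ x) S μ :=
        ((hp₁intg.indicator hD₁meas).const_mul c).integrableOn
      have hu2 : IntegrableOn (fun x => D₂.indicator p₁ x) S μ :=
        (hp₁intg.indicator hD₂meas).integrableOn
      have hu3 : IntegrableOn (fun x => (1 + c) * (T n).indicator p₁ x) S μ :=
        ((hp₁intg.indicator (hTmeas n)).const_mul (1 + c)).integrableOn
      have hu12 : IntegrableOn (fun x => c * D₁.indicator p₁ x - D₂.indicator p₁ x) S μ := by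
        exact hu1.sub hu2
      have hu123 : IntegrableOn (fun x =>
          c * D₁.indicator p₁ x - D₂.indicator p₁ x + (1 + c) * (T n).indicator p₁ x) S μ := by
        exact hu12.add hu3
      have hu4 : IntegrableOn (fun x => (θ - π) *
          (c * D₁.indicator p₁ x - D₂.indicator p₁ x + (1 + c) * (T n).indicator p₁ x)) S μ := by
        exact hu123.const_mul (θ - π)
      have hUint : IntegrableOn (fun x => F π x + (θ - π) *
          (c * D₁.indicator p₁ x - D₂.indicator p₁ x + (1 + c) * (T n).indicator p₁ x)) S μ :=
        (hFint π hπ0.le hπ1.le).add hu4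
      have hptwise : ∀ x ∈ S, F θ x ≤ F π x + (θ - π) *
          (c * D₁.indicator p₁ x - D₂.indicator p₁ x + (1 + c) * (T n).indicator p₁ x) := by
        intro x hx
        have hx' : 0 < p x := hx
        have hπle := hple x
        by_cases h1 : 0 < p₁ x
        · rcases eq_or_lt_of_le hπle with heq | hlt
          · have hm1 : x ∈ D₁ := ⟨h1, heq⟩
            have hm2 : x ∉ D₂ := fun h => absurd h.2 (by rw [heq]; exact lt_irrefl _)
            have hm3 : x ∉ T n := fun h => hm2 (hTD₂ n h)
            rw [Set.indicator_of_mem hm1, Set.indicator_of_notMem hm2,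
              Set.indicator_of_notMem hm3]
            simp only [hFdef]
            rw [if_neg (by nlinarith), if_pos hπle]
            nlinarith
          · have hm1 : x ∉ D₁ := fun h => absurd h.2 (ne_of_lt hlt)
            have hm2 : x ∈ D₂ := ⟨h1, hlt⟩
            rw [Set.indicator_of_notMem hm1, Set.indicator_of_mem hm2]
            simp only [hFdef]
            rw [if_pos hπle]
            by_cases hcase : θ * p₁ x ≤ p x
            · have hm3 : x ∉ T n := fun h => absurd h.2 (not_lt.mpr hcase)
              rw [Set.indicator_of_notMem hm3, if_pos hcase]
              nlinarith
            · have hm3 : x ∈ T n := ⟨hm2, not_le.mp hcase⟩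
              rw [Set.indicator_of_mem hm3, if_neg hcase]
              nlinarith [mul_pos hc (sub_pos.mpr hlt)]
        · have h0 : p₁ x = 0 := le_antisymm (not_lt.mp h1) (hp₁nonneg x)
          have hm1 : x ∉ D₁ := fun h => h1 h.1
          have hm2 : x ∉ D₂ := fun h => h1 h.1
          have hm3 : x ∉ T n := fun h => hm2 (hTD₂ n h)
          rw [Set.indicator_of_notMem hm1, Set.indicator_of_notMem hm2,
            Set.indicator_of_notMem hm3]
          simp only [hFdef, h0, mul_zero]
          split <;> linarith
      have hmono := setIntegral_mono_on (hFint θ hθ0 hθ1) hUint hSmeas hptwise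
      have hindT : ∫ x in S, (T n).indicator p₁ x ∂μ = a n := by
        rw [setIntegral_indicator (hTmeas n), Set.inter_eq_right.mpr ((hTD₂ n).trans hD₂S)]
      have hcalc : Div θ ≤ Div π + (θ - π) * (c * A - B + (1 + c) * a n) := by
        rw [hDivF θ, hDivF π]
        calc ∫ x in S, F θ x ∂μ ≤ _ := hmono
          _ = (∫ x in S, F π x ∂μ) + (θ - π) * (c * A - B + (1 + c) * a n) := by
            rw [integral_add (hFint π hπ0.le hπ1.le) hu4, integral_const_mul,
              integral_add hu12 hu3, integral_sub hu1 hu2,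
              integral_const_mul, integral_const_mul, hind₁, hind₂, hindT]
      have hmin' := hmin θ ⟨hθ0, hθ1⟩
      have hfac : 0 ≤ (θ - π) * (c * A - B + (1 + c) * a n) := by linarith
      have hθπ' : 0 < θ - π := by linarith
      by_contra hE
      push_neg at hE
      nlinarith
    have hatend : Filter.Tendsto a Filter.atTop (nhds 0) := by
      have hdom := tendsto_integral_of_dominated_convergence (μ := μ)
        (F := fun n => (T n).indicator p₁) (f := fun _ => (0:ℝ)) p₁
        (fun n => (hp₁meas.indicator (hTmeas n)).aestronglyMeasurable) hp₁intg
        (fun n => by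
          filter_upwards with x
          rw [Real.norm_eq_abs, abs_of_nonneg (Set.indicator_nonneg (fun y _ => hp₁nonneg y) x)]
          exact Set.indicator_le_self' (fun y _ => hp₁nonneg y) x)
        (by
          filter_upwards with x
          by_cases hx : x ∈ D₂
          · obtain ⟨h1, hlt⟩ := hx
            have hd : 0 < p x - π * p₁ x := by linarith
            obtain ⟨N, hN⟩ := exists_nat_gt ((1 - π) * p₁ x / (p x - π * p₁ x))
            rw [div_lt_iff₀ hd] at hN
            apply Filter.Tendsto.congr' _ tendsto_const_nhds
            rw [Filter.EventuallyEq, Filter.eventually_atTop]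
            refine ⟨N, fun n hn => ?_⟩
            have hn1 : (0:ℝ) < (n:ℝ) + 1 := by positivity
            have hcast : (N:ℝ) ≤ (n:ℝ) := Nat.cast_le.mpr hn
            have h3 : θn n * p₁ x ≤ p x := by
              have h4 : (1 - π) / ((n:ℝ) + 1) * p₁ x ≤ p x - π * p₁ x := by
                rw [div_mul_eq_mul_div, div_le_iff₀ hn1]
                nlinarith
              simp only [hθndef]
              nlinarith
            exact (Set.indicator_of_notMem (fun h => absurd h.2 (not_lt.mpr h3)) p₁).symm
          · have hz : ∀ m, (T m).indicator p₁ x = 0 :=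
              fun m => Set.indicator_of_notMem (fun h => hx (hTD₂ m h)) p₁
            simp only [hz]
            exact tendsto_const_nhds)
      simp only [integral_zero] at hdom
      have : a = fun n => ∫ x, (T n).indicator p₁ x ∂μ := by
        funext n
        rw [hadef]
        exact (integral_indicator (hTmeas n)).symm
      rw [this]
      exact hdom
    have hlim : Filter.Tendsto (fun n => c * A + (1 + c) * a n) Filter.atTop
        (nhds (c * A + (1 + c) * 0)) := tendsto_const_nhds.add (hatend.const_mul (1 + c))
    rw [mul_zero, add_zero] at hlim
    exact ge_of_tendsto' hlim hbound
  · intro hineq θ hθ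
    rcases le_or_gt θ π with h | h
    · rw [hDivπ, hDivlin θ hθ.1 h]; linarith
    · have h1 := hkey θ h hθ.2
      have h2 : 0 ≤ (θ - π) * (c * A - B) :=
        mul_nonneg (by linarith) (by linarith [hineq])
      linarith
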